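/- Let S be epsilon-strongly graded by a small groupoid G. Then for every morphism g of G, the sextuple (ε_g R, ε_{g^{-1}} R, S_g, S_{g^{-1}}, m_{g,g^{-1}}, m_{g^{-1},g}) is a set of equivalence data; in particular the multiplication maps m_{g,g^{-1}} : S_g ⊗ S_{g^{-1}} → ε_g R and m_{g^{-1},g} : S_{g^{-1}} ⊗ S_g → ε_{g^{-1}} R are isomorphisms. -/

import Mathlib

/- Setup: a ring `S` graded by a small groupoid.  The groupoid is given by a
`CategoryTheory.Groupoid` structure on a type `Obj` of objects.  Composition
convention: for `g : X ⟶ Y` and `h : Y ⟶ Z`, `g ≫ h : X ⟶ Z`; the grading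
satisfies `S_g · S_h ⊆ S_{g ≫ h}` for composable morphisms and
`S_g · S_h = 0` otherwise, and `S = ⊕_{g} S_g` (an internal direct sum over
the type of all morphisms). -/

open CategoryTheory DirectSum

/-- The type of all morphisms of the groupoid. -/
abbrev MorTot (Obj : Type u) [Groupoid.{v} Obj] : Type (max u v) := Σ X Y : Obj, X ⟶ Y

/-- Product of two additive subgroups of a ring: the additive span of the set of
pairwise products. -/
def aMul {S : Type w} [Ring S] (A B : AddSubgroup S) : AddSubgroup S :=
  AddSubgroup.closure {x : S | ∃ a ∈ A, ∃ b ∈ B, x = a * b}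

/-- A grading of the ring `S` by the groupoid with objects `Obj`. -/
structure GroupoidGrading (Obj : Type u) [Groupoid.{v} Obj] [DecidableEq (MorTot Obj)]
    (S : Type w) [Ring S] where
  comp : ∀ ⦃X Y : Obj⦄, (X ⟶ Y) → AddSubgroup S
  internal : DirectSum.IsInternal (fun g : MorTot Obj => comp g.2.2)
  mul_mem : ∀ ⦃X Y Z : Obj⦄ (g : X ⟶ Y) (h : Y ⟶ Z) ⦃a b : S⦄,
    a ∈ comp g → b ∈ comp h → a * b ∈ comp (g ≫ h)
  mul_eq_zero : ∀ ⦃X Y Z W : Obj⦄ (g : X ⟶ Y) (h : Z ⟶ W), Y ≠ Z →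
    ∀ ⦃a b : S⦄, a ∈ comp g → b ∈ comp h → a * b = 0

variable {Obj : Type u} [Groupoid.{v} Obj] [DecidableEq (MorTot Obj)]
  {S : Type w} [Ring S]

/-- The component `(1_S)_e ∈ S_e` of `1` at the identity morphism of `X`. -/
noncomputable def GroupoidGrading.oneComponent (hS : GroupoidGrading Obj S) (X : Obj) : S :=
  ((Equiv.ofBijective _ hS.internal).symm (1 : S) ⟨X, X, 𝟙 X⟩ : hS.comp (𝟙 X))

/-- `I` is a unital ideal of the (sub)ring `C`. -/
def IsUnitalIdealOf {S : Type w} [Ring S] (I C : AddSubgroup S) : Prop :=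
  I ≤ C ∧ (∀ a ∈ C, ∀ x ∈ I, a * x ∈ I ∧ x * a ∈ I) ∧
    ∃ e ∈ I, ∀ x ∈ I, e * x = x ∧ x * e = x

/-- `S` is epsilon-strongly graded: each `S_g S_{g⁻¹}` is a unital ideal of
`S_{c(g)}` and `S_g S_h = (S_g S_{g⁻¹}) S_{gh} = S_{gh} (S_{h⁻¹} S_h)` for all
composable pairs. -/
def GroupoidGrading.EpsilonStrong {Obj : Type u} [Groupoid.{v} Obj]
    [DecidableEq (MorTot Obj)] {S : Type w} [Ring S]
    (hS : GroupoidGrading Obj S) : Prop :=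
  (∀ ⦃X Y : Obj⦄ (g : X ⟶ Y),
     IsUnitalIdealOf (aMul (hS.comp g) (hS.comp (Groupoid.inv g))) (hS.comp (𝟙 X))) ∧
  (∀ ⦃X Y Z : Obj⦄ (g : X ⟶ Y) (h : Y ⟶ Z),
     aMul (hS.comp g) (hS.comp h)
       = aMul (aMul (hS.comp g) (hS.comp (Groupoid.inv g))) (hS.comp (g ≫ h)) ∧
     aMul (hS.comp g) (hS.comp h)
       = aMul (hS.comp (g ≫ h)) (aMul (hS.comp (Groupoid.inv h)) (hS.comp h)))


/-! ### Auxiliary infrastructure -/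

section Aux

/-- The decomposition of `S` as a direct sum, as an additive equivalence. -/
noncomputable def GroupoidGrading.decomp (hS : GroupoidGrading Obj S) :
    (⨁ i : MorTot Obj, hS.comp i.2.2) ≃+ S :=
  AddEquiv.ofBijective
    (DirectSum.coeAddMonoidHom fun i : MorTot Obj => hS.comp i.2.2) hS.internal

lemma GroupoidGrading.decomp_of (hS : GroupoidGrading Obj S) (i : MorTot Obj)
    (x : hS.comp i.2.2) :
    hS.decomp (DirectSum.of (fun i : MorTot Obj => hS.comp i.2.2) i x) = (x : S) :=
  DirectSum.coeAddMonoidHom_of _ _ _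

lemma GroupoidGrading.decomp_symm_of_mem (hS : GroupoidGrading Obj S) {i : MorTot Obj}
    {s : S} (h : s ∈ hS.comp i.2.2) :
    hS.decomp.symm s = DirectSum.of (fun i : MorTot Obj => hS.comp i.2.2) i ⟨s, h⟩ := by
  apply hS.decomp.injective
  rw [AddEquiv.apply_symm_apply, hS.decomp_of]

/-- Projection onto the component indexed by `i`. -/
noncomputable def GroupoidGrading.pi (hS : GroupoidGrading Obj S) (i : MorTot Obj) :
    S →+ hS.comp i.2.2 :=
  AddMonoidHom.mk' (fun s => hS.decomp.symm s i) (by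
    intro x y
    show hS.decomp.symm (x + y) i = hS.decomp.symm x i + hS.decomp.symm y i
    rw [map_add, DirectSum.add_apply])

lemma GroupoidGrading.pi_apply_of_mem (hS : GroupoidGrading Obj S) {i : MorTot Obj}
    {s : S} (h : s ∈ hS.comp i.2.2) : hS.pi i s = ⟨s, h⟩ := by
  show hS.decomp.symm s i = _
  rw [hS.decomp_symm_of_mem h, DirectSum.of_eq_same]

lemma GroupoidGrading.pi_apply_eq_zero (hS : GroupoidGrading Obj S) {i j : MorTot Obj}
    (hne : j ≠ i) {s : S} (h : s ∈ hS.comp j.2.2) : hS.pi i s = 0 := by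
  show hS.decomp.symm s i = _
  rw [hS.decomp_symm_of_mem h, DirectSum.of_eq_of_ne _ _ _ hne.symm]

lemma GroupoidGrading.oneComponent_eq (hS : GroupoidGrading Obj S) (X : Obj) :
    hS.oneComponent X = ((hS.decomp.symm 1) ⟨X, X, 𝟙 X⟩ : S) := by
  have h : (Equiv.ofBijective _ hS.internal).symm (1 : S) = hS.decomp.symm 1 := by
    apply hS.internal.injective
    have h1 := (Equiv.ofBijective _ hS.internal).apply_symm_apply (1 : S)
    have h2 := hS.decomp.apply_symm_apply (1 : S)
    exact h1.trans h2.symm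
  unfold GroupoidGrading.oneComponent
  rw [h]

lemma GroupoidGrading.oneComponent_mem (hS : GroupoidGrading Obj S) (X : Obj) :
    hS.oneComponent X ∈ hS.comp (𝟙 X) := by
  unfold GroupoidGrading.oneComponent
  exact Subtype.coe_prop _

/-- Right multiplication by the identity component of `1` acts as the identity on
each homogeneous component. -/
lemma GroupoidGrading.mul_oneComponent (hS : GroupoidGrading Obj S) {X Y : Obj}
    {g : X ⟶ Y} {a : S} (ha : a ∈ hS.comp g) : a * hS.oneComponent Y = a := by
  classical
  set d := hS.decomp.symm 1 with hd
  have hone : (1 : S) = ∑ j ∈ d.support, ((d j : S)) := by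
    conv_lhs => rw [← hS.decomp.apply_symm_apply (1 : S), ← hd,
      ← DirectSum.sum_support_of d]
    rw [map_sum]
    refine Finset.sum_congr rfl fun j _ => ?_
    exact hS.decomp_of _ _
  have hkey : hS.pi ⟨X, Y, g⟩ a = ∑ j ∈ d.support, hS.pi ⟨X, Y, g⟩ (a * (d j : S)) := by
    conv_lhs => rw [← mul_one a, hone, Finset.mul_sum]
    rw [map_sum]
  have hz : ∀ j ∈ d.support, j ≠ (⟨Y, Y, 𝟙 Y⟩ : MorTot Obj) →
      hS.pi ⟨X, Y, g⟩ (a * (d j : S)) = 0 := by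
    rintro ⟨Z, W, h⟩ - hne
    by_cases hZ : Y = Z
    · subst hZ
      have hmem : a * (d ⟨Y, W, h⟩ : S) ∈ hS.comp (g ≫ h) :=
        hS.mul_mem g h ha (d ⟨Y, W, h⟩).2
      refine hS.pi_apply_eq_zero (j := ⟨X, W, g ≫ h⟩) ?_ hmem
      intro hEq
      apply hne
      obtain ⟨-, h2⟩ := Sigma.mk.inj_iff.mp hEq
      obtain ⟨hWY, h3⟩ := Sigma.mk.inj_iff.mp (eq_of_heq h2)
      subst hWY
      have hgh : g ≫ h = g := eq_of_heq h3
      have hh : h = 𝟙 _ := by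
        have := congrArg (fun k => Groupoid.inv g ≫ k) hgh
        simpa only [← Category.assoc, Groupoid.inv_comp, Category.id_comp] using this
      rw [hh]
    · have h0 : a * (d ⟨Z, W, h⟩ : S) = 0 :=
        hS.mul_eq_zero g h hZ ha (d ⟨Z, W, h⟩).2
      rw [h0, map_zero]
  have hmemY : a * (d ⟨Y, Y, 𝟙 Y⟩ : S) ∈ hS.comp g := by
    have := hS.mul_mem g (𝟙 Y) ha (d ⟨Y, Y, 𝟙 Y⟩).2
    rwa [Category.comp_id] at this
  have hsum : (∑ j ∈ d.support, hS.pi ⟨X, Y, g⟩ (a * (d j : S)))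
      = hS.pi ⟨X, Y, g⟩ (a * (d ⟨Y, Y, 𝟙 Y⟩ : S)) := by
    refine Finset.sum_eq_single _ hz fun hnot => ?_
    rw [DFinsupp.notMem_support_iff.mp hnot]
    simp
  have hfin : (⟨a, ha⟩ : hS.comp g) = ⟨a * (d ⟨Y, Y, 𝟙 Y⟩ : S), hmemY⟩ := by
    rw [← hS.pi_apply_of_mem (i := ⟨X, Y, g⟩) ha,
      ← hS.pi_apply_of_mem (i := ⟨X, Y, g⟩) hmemY]
    exact hkey.trans hsum
  have := congrArg Subtype.val hfin
  rw [hS.oneComponent_eq, ← hd]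
  exact this.symm

lemma mul_mem_aMul {A B : AddSubgroup S} {a b : S} (ha : a ∈ A) (hb : b ∈ B) :
    a * b ∈ aMul A B :=
  AddSubgroup.subset_closure ⟨a, ha, b, hb, rfl⟩

lemma neg_list_sum_pairs {A B : AddSubgroup S} (l : List (A × B)) :
    ((l.map fun p => (-p.1, p.2)).map fun p : A × B => (p.1 : S) * (p.2 : S)).sum
      = -((l.map fun p : A × B => (p.1 : S) * (p.2 : S)).sum) := by
  induction l with
  | nil => simp
  | cons p l ih =>
    simp only [List.map_cons, List.sum_cons, List.map_map] at ih ⊢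
    rw [ih]
    simp only [Function.comp, NegMemClass.coe_neg, neg_mul]
    rw [neg_add]

lemma exists_list_of_mem_aMul {A B : AddSubgroup S} {x : S} (hx : x ∈ aMul A B) :
    ∃ l : List (A × B), x = (l.map fun p => (p.1 : S) * (p.2 : S)).sum := by
  refine AddSubgroup.closure_induction
    (p := fun x _ => ∃ l : List (A × B), x = (l.map fun p => (p.1 : S) * (p.2 : S)).sum)
    ?_ ?_ ?_ ?_ hx
  · rintro x ⟨a, ha, b, hb, rfl⟩
    exact ⟨[(⟨a, ha⟩, ⟨b, hb⟩)], by simp⟩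
  · exact ⟨[], by simp⟩
  · rintro x y - - ⟨l₁, rfl⟩ ⟨l₂, rfl⟩
    exact ⟨l₁ ++ l₂, by simp⟩
  · rintro x - ⟨l, rfl⟩
    exact ⟨l.map fun p => (-p.1, p.2), (neg_list_sum_pairs l).symm⟩

lemma list_sum_add {γ δ : Type*} [AddCommMonoid δ] (f h : γ → δ) (l : List γ) :
    (l.map fun p => f p + h p).sum = (l.map f).sum + (l.map h).sum := by
  induction l with
  | nil => simp
  | cons a l ih => simp [ih, add_add_add_comm]

lemma map_list_sum_of_add {γ : Type*} [AddCommMonoid γ] {δ : Type*} [AddCommMonoid δ]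
    (f : γ → δ) (h0 : f 0 = 0) (hadd : ∀ x y, f (x + y) = f x + f y) (l : List γ) :
    f l.sum = (l.map f).sum := by
  induction l with
  | nil => simpa using h0
  | cons a l ih => simp [hadd, ih]

lemma sum_mul_right {A B : AddSubgroup S} (a : S) (l : List (A × B)) :
    (l.map fun p => (p.1 : S) * ((p.2 : S) * a)).sum
      = (l.map fun p => (p.1 : S) * (p.2 : S)).sum * a := by
  induction l with
  | nil => simp
  | cons p l ih => simp [ih, add_mul, mul_assoc]

/-- The unit of the ideal `S_g S_{g'}` is a left identity on `S_g`. -/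
lemma eps_mul_eq_self (hS : GroupoidGrading Obj S) (hstr : hS.EpsilonStrong)
    {X Y : Obj} (g : X ⟶ Y) (g' : Y ⟶ X) (hinv : Groupoid.inv g = g') {e : S}
    (he : ∀ x ∈ aMul (hS.comp g) (hS.comp g'), e * x = x)
    {a : S} (ha : a ∈ hS.comp g) : e * a = a := by
  have hmem : a ∈ aMul (aMul (hS.comp g) (hS.comp g')) (hS.comp g) := by
    have h2 := (hstr.2 g (𝟙 Y)).1
    rw [hinv, Category.comp_id] at h2
    rw [← h2]
    exact AddSubgroup.subset_closure
      ⟨a, ha, hS.oneComponent Y, hS.oneComponent_mem Y, (hS.mul_oneComponent ha).symm⟩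
  refine AddSubgroup.closure_induction (p := fun x _ => e * x = x) ?_ ?_ ?_ ?_ hmem
  · rintro x ⟨r, hr, s, hs, rfl⟩
    rw [← mul_assoc, he r hr]
  · exact mul_zero e
  · intro x y _ _ ihx ihy
    show e * (x + y) = x + y
    rw [mul_add, ihx, ihy]
  · intro x _ ih
    show e * (-x) = -x
    rw [mul_neg, ih]

/-- Core lemma: injectivity and range identification of the multiplication map. -/
lemma core_equivalence (hS : GroupoidGrading Obj S) (hstr : hS.EpsilonStrong)
    {X Y : Obj} (g : X ⟶ Y) (g' : Y ⟶ X) (hinv : Groupoid.inv g = g')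
    (T : Type w) [AddCommGroup T]
    (t : hS.comp g → hS.comp g' → T)
    (tadd₁ : ∀ a a' b, t (a + a') b = t a b + t a' b)
    (tadd₂ : ∀ a b b', t a (b + b') = t a b + t a b')
    (tbal : ∀ (a : hS.comp g) (b : hS.comp g') (r : S),
      r ∈ aMul (hS.comp g') (hS.comp g) →
      ∀ (h₁ : (a : S) * r ∈ hS.comp g) (h₂ : r * (b : S) ∈ hS.comp g'),
        t ⟨(a : S) * r, h₁⟩ b = t a ⟨r * (b : S), h₂⟩)
    (tuniv : ∀ (M : Type w) [AddCommGroup M]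
      (b : hS.comp g → hS.comp g' → M),
      (∀ a a' x, b (a + a') x = b a x + b a' x) →
      (∀ a x x', b a (x + x') = b a x + b a x') →
      (∀ (a : hS.comp g) (x : hS.comp g') (r : S),
        r ∈ aMul (hS.comp g') (hS.comp g) →
        ∀ (h₁ : (a : S) * r ∈ hS.comp g) (h₂ : r * (x : S) ∈ hS.comp g'),
          b ⟨(a : S) * r, h₁⟩ x = b a ⟨r * (x : S), h₂⟩) →
      ∃! φ : T →+ M, ∀ a x, φ (t a x) = b a x)
    (m : T →+ S) (hm : ∀ a b, m (t a b) = (a : S) * (b : S)) :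
    Function.Injective m ∧ Set.range m = ↑(aMul (hS.comp g) (hS.comp g')) := by
  classical
  have hgg' : g ≫ g' = 𝟙 X := by rw [← hinv]; exact Groupoid.comp_inv g
  have hg'g : g' ≫ g = 𝟙 Y := by rw [← hinv]; exact Groupoid.inv_comp g
  have t01 : ∀ b, t 0 b = 0 := by
    intro b
    have h := tadd₁ 0 0 b
    rw [add_zero] at h
    have h2 : t 0 b + t 0 b = t 0 b + 0 := by rw [add_zero]; exact h.symm
    exact add_left_cancel h2
  -- the unital ideal structure
  have h1 := hstr.1 g
  rw [hinv] at h1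
  obtain ⟨hle, hideal, e, heE, hunit⟩ := h1
  have heA : ∀ {a : S}, a ∈ hS.comp g → e * a = a := fun {a} ha =>
    eps_mul_eq_self hS hstr g g' hinv (fun x hx => (hunit x hx).1) ha
  obtain ⟨l, hl⟩ := exists_list_of_mem_aMul heE
  -- the inverse map
  let ψ : S →+ T := AddMonoidHom.mk'
    (fun s => (l.map fun p => t p.1 (hS.pi ⟨Y, X, g'⟩ ((p.2 : S) * s))).sum)
    (by
      intro s₁ s₂
      show (l.map fun p => t p.1 (hS.pi ⟨Y, X, g'⟩ ((p.2 : S) * (s₁ + s₂)))).sum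
          = (l.map fun p => t p.1 (hS.pi ⟨Y, X, g'⟩ ((p.2 : S) * s₁))).sum
            + (l.map fun p => t p.1 (hS.pi ⟨Y, X, g'⟩ ((p.2 : S) * s₂))).sum
      have hfe : (fun p : hS.comp g × hS.comp g' =>
          t p.1 (hS.pi ⟨Y, X, g'⟩ ((p.2 : S) * (s₁ + s₂))))
          = fun p => t p.1 (hS.pi ⟨Y, X, g'⟩ ((p.2 : S) * s₁))
            + t p.1 (hS.pi ⟨Y, X, g'⟩ ((p.2 : S) * s₂)) := by
        funext p
        rw [mul_add, map_add, tadd₂]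
      rw [hfe, list_sum_add])
  have hmain : ∀ (a : hS.comp g) (b : hS.comp g'), ψ ((a : S) * (b : S)) = t a b := by
    intro a b
    have hab : (a : S) * (b : S) ∈ hS.comp (𝟙 X) := by
      have := hS.mul_mem g g' a.2 b.2
      rwa [hgg'] at this
    have hq : ∀ p : hS.comp g × hS.comp g',
        (p.1 : S) * ((p.2 : S) * (a : S)) ∈ hS.comp g := by
      intro p
      have hm2 : (p.2 : S) * (a : S) ∈ hS.comp (𝟙 Y) := by
        have := hS.mul_mem g' g p.2.2 a.2
        rwa [hg'g] at this
      have := hS.mul_mem g (𝟙 Y) p.1.2 hm2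
      rwa [Category.comp_id] at this
    have hfun : (fun p : hS.comp g × hS.comp g' =>
        t p.1 (hS.pi ⟨Y, X, g'⟩ ((p.2 : S) * ((a : S) * (b : S)))))
        = fun p => t (⟨(p.1 : S) * ((p.2 : S) * (a : S)), hq p⟩ : hS.comp g) b := by
      funext p
      have hmem1 : (p.2 : S) * ((a : S) * (b : S)) ∈ hS.comp g' := by
        have := hS.mul_mem g' (𝟙 X) p.2.2 hab
        rwa [Category.comp_id] at this
      rw [hS.pi_apply_of_mem (i := ⟨Y, X, g'⟩) hmem1]
      have hr : (p.2 : S) * (a : S) ∈ aMul (hS.comp g') (hS.comp g) :=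
        mul_mem_aMul p.2.2 a.2
      have h₂ : ((p.2 : S) * (a : S)) * (b : S) ∈ hS.comp g' := by
        have hm2 : (p.2 : S) * (a : S) ∈ hS.comp (𝟙 Y) := by
          have := hS.mul_mem g' g p.2.2 a.2
          rwa [hg'g] at this
        have := hS.mul_mem (𝟙 Y) g' hm2 b.2
        rwa [Category.id_comp] at this
      have hb := tbal p.1 b ((p.2 : S) * (a : S)) hr (hq p) h₂
      have hsub : (⟨(p.2 : S) * ((a : S) * (b : S)), hmem1⟩ : hS.comp g')
          = ⟨((p.2 : S) * (a : S)) * (b : S), h₂⟩ :=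
        Subtype.ext (mul_assoc _ _ _).symm
      rw [hsub, ← hb]
    show (l.map fun p => t p.1 (hS.pi ⟨Y, X, g'⟩ ((p.2 : S) * ((a : S) * (b : S))))).sum
        = t a b
    rw [hfun]
    have hcomp : (fun p : hS.comp g × hS.comp g' =>
        t (⟨(p.1 : S) * ((p.2 : S) * (a : S)), hq p⟩ : hS.comp g) b)
        = (fun x : hS.comp g => t x b)
          ∘ (fun p => (⟨(p.1 : S) * ((p.2 : S) * (a : S)), hq p⟩ : hS.comp g)) := rfl
    rw [hcomp, ← List.map_map,
      ← map_list_sum_of_add (fun x : hS.comp g => t x b) (t01 b)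
        (fun x y => tadd₁ x y b)]
    have hval : (((l.map fun p : hS.comp g × hS.comp g' =>
        (⟨(p.1 : S) * ((p.2 : S) * (a : S)), hq p⟩ : hS.comp g)).sum : hS.comp g) : S)
        = (a : S) := by
      have hcast := map_list_sum_of_add (fun x : hS.comp g => (x : S)) rfl
        (fun x y => rfl)
        (l.map fun p : hS.comp g × hS.comp g' =>
          (⟨(p.1 : S) * ((p.2 : S) * (a : S)), hq p⟩ : hS.comp g))
      rw [hcast, List.map_map]
      have : ((fun x : hS.comp g => (x : S)) ∘ fun p : hS.comp g × hS.comp g' =>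
          (⟨(p.1 : S) * ((p.2 : S) * (a : S)), hq p⟩ : hS.comp g))
          = fun p : hS.comp g × hS.comp g' => (p.1 : S) * ((p.2 : S) * (a : S)) := rfl
      rw [this, sum_mul_right, ← hl, heA a.2]
    have hsum : ((l.map fun p : hS.comp g × hS.comp g' =>
        (⟨(p.1 : S) * ((p.2 : S) * (a : S)), hq p⟩ : hS.comp g)).sum) = a :=
      Subtype.ext hval
    rw [hsum]
  -- uniqueness
  obtain ⟨φ, hφ, huniq⟩ := tuniv T t tadd₁ tadd₂ tbal
  have h_id : (AddMonoidHom.id T) = φ := huniq _ (fun a x => rfl)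
  have h_comp : ψ.comp m = φ := huniq _ (fun a x => by
    rw [AddMonoidHom.comp_apply, hm, hmain])
  have hleft : ∀ x : T, ψ (m x) = x := by
    intro x
    have h := h_comp.trans h_id.symm
    exact DFunLike.congr_fun h x
  constructor
  · exact Function.LeftInverse.injective hleft
  · -- generation of T
    have hgen : ∀ x : T, x ∈ AddSubgroup.closure
        (Set.range fun p : hS.comp g × hS.comp g' => t p.1 p.2) := by
      intro x
      set N := AddSubgroup.closure
        (Set.range fun p : hS.comp g × hS.comp g' => t p.1 p.2) with hN
      obtain ⟨χ, hχ, huniqN⟩ := tuniv (T ⧸ N)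
        (fun a b => QuotientAddGroup.mk' N (t a b))
        (fun a a' x => by
          show QuotientAddGroup.mk' N (t (a + a') x)
              = QuotientAddGroup.mk' N (t a x) + QuotientAddGroup.mk' N (t a' x)
          rw [tadd₁, map_add])
        (fun a x x' => by
          show QuotientAddGroup.mk' N (t a (x + x'))
              = QuotientAddGroup.mk' N (t a x) + QuotientAddGroup.mk' N (t a x')
          rw [tadd₂, map_add])
        (fun a x r hr h₁ h₂ => by
          show QuotientAddGroup.mk' N (t ⟨(a : S) * r, h₁⟩ x)
              = QuotientAddGroup.mk' N (t a ⟨r * (x : S), h₂⟩)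
          rw [tbal a x r hr h₁ h₂])
      have e1 : (QuotientAddGroup.mk' N) = χ := huniqN _ (fun a x => rfl)
      have e2 : (0 : T →+ T ⧸ N) = χ := huniqN _ (fun a x => by
        rw [AddMonoidHom.zero_apply]
        have hmem : t a x ∈ N := by
          rw [hN]
          exact AddSubgroup.subset_closure ⟨(a, x), rfl⟩
        exact ((QuotientAddGroup.eq_zero_iff (t a x)).mpr hmem).symm)
      have hzero : QuotientAddGroup.mk' N x = 0 := by
        rw [e1.trans e2.symm]
        rfl
      exact (QuotientAddGroup.eq_zero_iff x).mp hzero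
    apply subset_antisymm
    · rintro y ⟨x, rfl⟩
      refine AddSubgroup.closure_induction
        (p := fun y _ => m y ∈ aMul (hS.comp g) (hS.comp g')) ?_ ?_ ?_ ?_ (hgen x)
      · rintro y ⟨⟨a, b⟩, rfl⟩
        show m (t a b) ∈ aMul (hS.comp g) (hS.comp g')
        rw [hm]
        exact mul_mem_aMul a.2 b.2
      · show m 0 ∈ aMul (hS.comp g) (hS.comp g')
        rw [map_zero]; exact zero_mem _
      · intro y z _ _ hy hz
        show m (y + z) ∈ aMul (hS.comp g) (hS.comp g')
        rw [map_add]; exact add_mem hy hz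
      · intro y _ hy
        show m (-y) ∈ aMul (hS.comp g) (hS.comp g')
        rw [map_neg]; exact neg_mem hy
    · intro y hy
      refine AddSubgroup.closure_induction
        (p := fun y _ => y ∈ Set.range ⇑m) ?_ ?_ ?_ ?_ hy
      · rintro y ⟨a, ha, b, hb, rfl⟩
        exact ⟨t ⟨a, ha⟩ ⟨b, hb⟩, hm _ _⟩
      · exact ⟨0, map_zero m⟩
      · rintro y z - - ⟨u, rfl⟩ ⟨v, rfl⟩
        exact ⟨u + v, map_add m u v⟩
      · rintro y - ⟨u, rfl⟩
        exact ⟨-u, map_neg m u⟩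

end Aux

/-- Let `S` be epsilon-strongly graded by a small groupoid.  For
every morphism `g`, the sextuple
`(ε_g R, ε_{g⁻¹} R, S_g, S_{g⁻¹}, m_{g,g⁻¹}, m_{g⁻¹,g})` is a set of equivalence
data.  Here `ε_g R = S_g S_{g⁻¹}` and `ε_{g⁻¹} R = S_{g⁻¹} S_g`; the tensor
products `S_g ⊗_{ε_{g⁻¹}R} S_{g⁻¹}` and `S_{g⁻¹} ⊗_{ε_g R} S_g` are encoded by
their universal property (`T`, `t` resp. `T'`, `t'`), and the multiplication
maps `m`, `m'` are determined by `m (t a b) = a * b`, `m' (t' b a) = b * a`.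
Conclusion: the associativity conditions of equivalence data hold and both
multiplication maps are bijective onto `ε_g R` resp. `ε_{g⁻¹} R`. -/
theorem equivalence_data_of_epsilonStrong (hS : GroupoidGrading Obj S)
    (hstr : hS.EpsilonStrong) {X Y : Obj} (g : X ⟶ Y)
    (T : Type w) [AddCommGroup T]
    (t : hS.comp g → hS.comp (Groupoid.inv g) → T)
    (tadd₁ : ∀ a a' b, t (a + a') b = t a b + t a' b)
    (tadd₂ : ∀ a b b', t a (b + b') = t a b + t a b')
    (tbal : ∀ (a : hS.comp g) (b : hS.comp (Groupoid.inv g)) (r : S),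
      r ∈ aMul (hS.comp (Groupoid.inv g)) (hS.comp g) →
      ∀ (h₁ : (a : S) * r ∈ hS.comp g) (h₂ : r * (b : S) ∈ hS.comp (Groupoid.inv g)),
        t ⟨(a : S) * r, h₁⟩ b = t a ⟨r * (b : S), h₂⟩)
    (tuniv : ∀ (M : Type w) [AddCommGroup M]
      (b : hS.comp g → hS.comp (Groupoid.inv g) → M),
      (∀ a a' x, b (a + a') x = b a x + b a' x) →
      (∀ a x x', b a (x + x') = b a x + b a x') →
      (∀ (a : hS.comp g) (x : hS.comp (Groupoid.inv g)) (r : S),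
        r ∈ aMul (hS.comp (Groupoid.inv g)) (hS.comp g) →
        ∀ (h₁ : (a : S) * r ∈ hS.comp g) (h₂ : r * (x : S) ∈ hS.comp (Groupoid.inv g)),
          b ⟨(a : S) * r, h₁⟩ x = b a ⟨r * (x : S), h₂⟩) →
      ∃! φ : T →+ M, ∀ a x, φ (t a x) = b a x)
    (T' : Type w) [AddCommGroup T']
    (t' : hS.comp (Groupoid.inv g) → hS.comp g → T')
    (t'add₁ : ∀ a a' b, t' (a + a') b = t' a b + t' a' b)
    (t'add₂ : ∀ a b b', t' a (b + b') = t' a b + t' a b')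
    (t'bal : ∀ (a : hS.comp (Groupoid.inv g)) (b : hS.comp g) (r : S),
      r ∈ aMul (hS.comp g) (hS.comp (Groupoid.inv g)) →
      ∀ (h₁ : (a : S) * r ∈ hS.comp (Groupoid.inv g)) (h₂ : r * (b : S) ∈ hS.comp g),
        t' ⟨(a : S) * r, h₁⟩ b = t' a ⟨r * (b : S), h₂⟩)
    (t'univ : ∀ (M : Type w) [AddCommGroup M]
      (b : hS.comp (Groupoid.inv g) → hS.comp g → M),
      (∀ a a' x, b (a + a') x = b a x + b a' x) →
      (∀ a x x', b a (x + x') = b a x + b a x') →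
      (∀ (a : hS.comp (Groupoid.inv g)) (x : hS.comp g) (r : S),
        r ∈ aMul (hS.comp g) (hS.comp (Groupoid.inv g)) →
        ∀ (h₁ : (a : S) * r ∈ hS.comp (Groupoid.inv g)) (h₂ : r * (x : S) ∈ hS.comp g),
          b ⟨(a : S) * r, h₁⟩ x = b a ⟨r * (x : S), h₂⟩) →
      ∃! φ : T' →+ M, ∀ a x, φ (t' a x) = b a x)
    (m : T →+ S) (hm : ∀ a b, m (t a b) = (a : S) * (b : S))
    (m' : T' →+ S) (hm' : ∀ b a, m' (t' b a) = (b : S) * (a : S)) :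
    (∀ (a a' : hS.comp g) (b : hS.comp (Groupoid.inv g)),
      m (t a b) * (a' : S) = (a : S) * m' (t' b a')) ∧
    (∀ (b b' : hS.comp (Groupoid.inv g)) (a : hS.comp g),
      m' (t' b a) * (b' : S) = (b : S) * m (t a b')) ∧
    Function.Injective m ∧
    Set.range m = ↑(aMul (hS.comp g) (hS.comp (Groupoid.inv g))) ∧
    Function.Injective m' ∧
    Set.range m' = ↑(aMul (hS.comp (Groupoid.inv g)) (hS.comp g)) := by
  obtain ⟨hinj, hrange⟩ := core_equivalence hS hstr g (Groupoid.inv g) rfl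
    T t tadd₁ tadd₂ tbal tuniv m hm
  obtain ⟨hinj', hrange'⟩ := core_equivalence hS hstr (Groupoid.inv g) g (by simp)
    T' t' t'add₁ t'add₂ t'bal t'univ m' hm'
  refine ⟨?_, ?_, hinj, hrange, hinj', hrange'⟩
  · intro a a' b
    rw [hm, hm', mul_assoc]
  · intro b b' a
    rw [hm', hm, mul_assoc]
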